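/- Let a, a' > 0 and consider SL₂(ℝ). The set {t ∈ T_{>0} : t·y(a)·t⁻¹·y(a')⁻¹ is totally positive lower unitriangular} is homeomorphic to ℝ_{>0} via t = diag(r, r⁻¹) ↦ (r⁻²)·a − a'. -/

import Mathlib

theorem stmt14 (a a' : ℝ) (ha : 0 < a) (ha' : 0 < a') :
    ∃ h : {r : ℝ // 0 < r ∧ ∃ w : ℝ, 0 < w ∧
        !![r, 0; 0, r⁻¹] * !![1, 0; a, 1] * (!![r, 0; 0, r⁻¹])⁻¹
            * (!![(1:ℝ), 0; a', 1])⁻¹ = !![1, 0; w, 1]} ≃ₜ {x : ℝ // 0 < x},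
      ∀ p, (h p : ℝ) = ((p : ℝ) ^ 2)⁻¹ * a - a' := by
  have key : ∀ r w : ℝ, 0 < r →
      ((!![r, 0; 0, r⁻¹] * !![1, 0; a, 1] * (!![r, 0; 0, r⁻¹])⁻¹
            * (!![(1:ℝ), 0; a', 1])⁻¹ = !![1, 0; w, 1]) ↔ w = (r^2)⁻¹ * a - a') := by
    intro r w hr
    have hr0 : r ≠ 0 := hr.ne'
    have h1 : (!![r, 0; 0, r⁻¹])⁻¹ = !![r⁻¹, 0; 0, r] := by
      apply Matrix.inv_eq_right_inv
      ext i j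
      fin_cases i <;> fin_cases j <;>
        simp [Matrix.mul_apply, Fin.sum_univ_two, hr0, mul_inv_cancel₀, inv_mul_cancel₀]
    have h2 : (!![(1:ℝ), 0; a', 1])⁻¹ = !![1, 0; -a', 1] := by
      apply Matrix.inv_eq_right_inv
      ext i j
      fin_cases i <;> fin_cases j <;>
        simp [Matrix.mul_apply, Fin.sum_univ_two]
    rw [h1, h2]
    constructor
    · intro h
      have := congrFun (congrFun h 1) 0
      simp [Matrix.mul_apply, Fin.sum_univ_two] at this
      rw [← this]; field_simp; ring
    · intro h
      subst h
      ext i j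
      fin_cases i <;> fin_cases j <;>
        (simp [Matrix.mul_apply, Fin.sum_univ_two, hr0]; try field_simp; try ring)
  -- membership rephrasing
  have mem_iff : ∀ r : ℝ, (0 < r ∧ ∃ w : ℝ, 0 < w ∧
        !![r, 0; 0, r⁻¹] * !![1, 0; a, 1] * (!![r, 0; 0, r⁻¹])⁻¹
            * (!![(1:ℝ), 0; a', 1])⁻¹ = !![1, 0; w, 1]) ↔ (0 < r ∧ 0 < (r^2)⁻¹ * a - a') := by
    intro r
    constructor
    · rintro ⟨hr, w, hw, heq⟩
      exact ⟨hr, ((key r w hr).1 heq) ▸ hw⟩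
    · rintro ⟨hr, hpos⟩
      exact ⟨hr, _, hpos, (key r _ hr).2 rfl⟩
  -- inverse map data
  have hginv : ∀ x : ℝ, 0 < x →
      let r := Real.sqrt (a / (x + a'))
      0 < r ∧ (r^2)⁻¹ * a - a' = x := by
    intro x hx
    have hxa : 0 < x + a' := by linarith
    have hq : 0 < a / (x + a') := div_pos ha hxa
    constructor
    · exact Real.sqrt_pos.2 hq
    · rw [Real.sq_sqrt hq.le]
      field_simp
      ring
  refine ⟨{
    toFun := fun p => ⟨((p : ℝ)^2)⁻¹ * a - a', ((mem_iff p).1 p.2).2⟩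
    invFun := fun x => ⟨Real.sqrt (a / ((x : ℝ) + a')),
      (mem_iff _).2 ⟨(hginv x x.2).1, by rw [(hginv x x.2).2]; exact x.2⟩⟩
    left_inv := by
      rintro ⟨r, hr⟩
      have hr' := (mem_iff r).1 hr
      have h1 : ((r:ℝ)^2)⁻¹ * a - a' + a' = a / r^2 := by
        field_simp
        ring
      apply Subtype.ext
      simp only [h1]
      rw [div_div_eq_mul_div, mul_comm, mul_div_assoc, div_self ha.ne', mul_one]
      exact Real.sqrt_sq hr'.1.le
    right_inv := by
      rintro ⟨x, hx⟩
      apply Subtype.ext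
      exact (hginv x hx).2
    continuous_toFun := by
      apply Continuous.subtype_mk
      exact (((continuous_subtype_val.pow 2).inv₀
        (fun x => (pow_pos x.2.1 2).ne')).mul continuous_const).sub continuous_const
    continuous_invFun := by
      apply Continuous.subtype_mk
      exact Real.continuous_sqrt.comp <| Continuous.div₀ continuous_const
        (continuous_subtype_val.add continuous_const)
        (fun x => by have := x.2; positivity)
  }, fun p => rfl⟩
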